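/- arXiv:2105.14121 — 3 statements merged into one kernel-verified Lean document; each statement's English description precedes it below -/
import Mathlib

section
/- Let F : V → V be injective. Then the class I = {y | ∃ x, y = F(x) ∧ F(x) ∉ x} admits a productive choice via F: for every set s ⊆ I, F(s) ∈ I and F(s) ∉ s. Consequently I is a proper class. -/
theorem injective_productive_class {V : Type*} (mem : V → V → Prop)
    (F : V → V) (hF : Function.Injective F) :
    (∀ s : V, (∀ y, mem y s → ∃ x, y = F x ∧ ¬ mem (F x) x) →
      (∃ x, F s = F x ∧ ¬ mem (F x) x) ∧ ¬ mem (F s) s) ∧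
    ¬ ∃ r : V, ∀ y, mem y r ↔ ∃ x, y = F x ∧ ¬ mem (F x) x := by
  have key : ∀ s : V, (∀ y, mem y s → ∃ x, y = F x ∧ ¬ mem (F x) x) →
      (∃ x, F s = F x ∧ ¬ mem (F x) x) ∧ ¬ mem (F s) s := by
    intro s hs
    have hns : ¬ mem (F s) s := by
      intro h
      obtain ⟨x, hx, hnx⟩ := hs _ h
      exact hnx (hF hx ▸ h)
    exact ⟨⟨s, rfl, hns⟩, hns⟩
  refine ⟨key, ?_⟩
  rintro ⟨r, hr⟩
  obtain ⟨hI, hnr⟩ := key r (fun y hy => (hr y).mp hy)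
  exact hnr ((hr (F r)).mpr hI)
end

section
/- A function F : V → V is productive on some class if and only if it is productive on its least fixed point I(F) = {x | ∀ C, (∀ s ⊆ C, F(s) ∈ C) → x ∈ C}. -/
theorem productive_iff_productive_on_lfp {V : Type*} (mem : V → V → Prop)
    (F : V → V) :
    (∃ C : V → Prop, ∀ s : V, (∀ x, mem x s → C x) → C (F s) ∧ ¬ mem (F s) s) ↔
    (∀ s : V, (∀ x, mem x s →
        (∀ C : V → Prop, (∀ t, (∀ y, mem y t → C y) → C (F t)) → C x)) →
      (∀ C : V → Prop, (∀ t, (∀ y, mem y t → C y) → C (F t)) → C (F s)) ∧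
        ¬ mem (F s) s) := by
  constructor
  · rintro ⟨C, hC⟩ s hs
    constructor
    · intro D hD
      exact hD s (fun x hx => hs x hx D hD)
    · have hsub : ∀ x, mem x s → C x := fun x hx =>
        hs x hx C (fun t ht => (hC t ht).1)
      exact (hC s hsub).2
  · intro h
    refine ⟨fun x => ∀ C : V → Prop, (∀ t, (∀ y, mem y t → C y) → C (F t)) → C x,
      fun s hs => ⟨?_, (h s hs).2⟩⟩
    intro D hD
    exact hD s (fun x hx => hs x hx D hD)
end

section
/- If F : V → V is injective, then the least fixed point I(F) of F is a proper class: no set has exactly the members of I(F). -/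
theorem lfp_of_injective_proper {V : Type*} (mem : V → V → Prop)
    (F : V → V) (hF : Function.Injective F) :
    ¬ ∃ r : V, ∀ x, mem x r ↔
      (∀ C : V → Prop, (∀ s, (∀ y, mem y s → C y) → C (F s)) → C x) := by
  rintro ⟨r, hr⟩
  -- The diagonal class: x is an image F a with x ∉ a
  set C : V → Prop := fun x => ∃ a, x = F a ∧ ¬ mem x a with hC
  have hind : ∀ s, (∀ y, mem y s → C y) → C (F s) := by
    intro s hs
    refine ⟨s, rfl, fun hmem => ?_⟩
    obtain ⟨a, ha, hna⟩ := hs (F s) hmem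
    exact hna (hF ha ▸ hmem)
  -- I (F r) holds since every member of r is in I
  have hIFr : ∀ C' : V → Prop, (∀ s, (∀ y, mem y s → C' y) → C' (F s)) → C' (F r) := by
    intro C' hC'
    exact hC' r (fun y hy => (hr y).mp hy C' hC')
  have hmemFr : mem (F r) r := (hr (F r)).mpr hIFr
  obtain ⟨a, ha, hna⟩ := hIFr C hind
  exact hna (hF ha ▸ hmemFr)
end
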